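/- Let k₁₂ ≥ 1 be real and let s₁, s₂, p₁, p₂ be real. Then the complex-valued function t ↦ (1-t)^{-k₁₂ + i p₁ + i p₂} · t^{-i p₂ + i s₂ - 1/2} · ₂F₁(1-k₁₂+i s₁+i s₂, 1-k₁₂-i s₁+i s₂; 1+2i s₂; t) is integrable with respect to Lebesgue measure on (0,1/2), and the function t ↦ (1-t)^{k₁₂ - 1 + i p₁ + i p₂} · t^{-i p₂ + i s₂ - 1/2} · ₂F₁(k₁₂-i s₁+i s₂, k₁₂+i s₁+i s₂; 2k₁₂; 1-t) is integrable with respect to Lebesgue measure on (1/2,1). (Convergence of the two pieces of the integral I₂(C,C,+).) -/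

import Mathlib

open Complex Filter Set MeasureTheory

/-- The `n`-th term of the Gauss hypergeometric series `₂F₁(a,b;c;z)`. -/
noncomputable def hypTerm (a b c z : ℂ) (n : ℕ) : ℂ :=
  (ascPochhammer ℂ n).eval a * (ascPochhammer ℂ n).eval b /
    ((ascPochhammer ℂ n).eval c * (n.factorial : ℂ)) * z ^ n

/-- The Gauss hypergeometric function `₂F₁(a,b;c;z)`. -/
noncomputable def hyp (a b c z : ℂ) : ℂ := ∑' n, hypTerm a b c z n

lemma pochEval_succ (x : ℂ) (n : ℕ) :
    (ascPochhammer ℂ (n+1)).eval x = (ascPochhammer ℂ n).eval x * (x + n) := by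
  simp [ascPochhammer_succ_right, Polynomial.eval_mul]

lemma add_nat_ne_zero {c : ℂ} (hc : 0 < c.re) (n : ℕ) : c + (n : ℂ) ≠ 0 := by
  intro h
  have h2 : (c + (n : ℂ)).re = 0 := by rw [h]; simp
  simp only [Complex.add_re, Complex.natCast_re] at h2
  have := Nat.cast_nonneg (α := ℝ) n
  linarith

lemma pochEval_ne_zero {c : ℂ} (hc : 0 < c.re) : ∀ n, (ascPochhammer ℂ n).eval c ≠ 0 := by
  intro n
  induction n with
  | zero => simp
  | succ n ih =>
    rw [pochEval_succ]
    exact mul_ne_zero ih (add_nat_ne_zero hc n)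

noncomputable def hypBound (a b c : ℂ) (n : ℕ) : ℝ :=
  ‖(ascPochhammer ℂ n).eval a‖ * ‖(ascPochhammer ℂ n).eval b‖ /
    (‖(ascPochhammer ℂ n).eval c‖ * n.factorial) * (1/2)^n

lemma norm_hypTerm_le (a b c z : ℂ) (hz : ‖z‖ ≤ 1/2) (n : ℕ) :
    ‖hypTerm a b c z n‖ ≤ hypBound a b c n := by
  unfold hypTerm hypBound
  rw [norm_mul, norm_div, norm_mul, norm_mul, norm_pow, Complex.norm_natCast]
  gcongr

lemma hypBound_summable (a b c : ℂ) (hc : 0 < c.re) : Summable (hypBound a b c) := by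
  apply summable_of_ratio_norm_eventually_le (r := 3/4) (by norm_num)
  have hA := norm_nonneg a; have hB := norm_nonneg b; have hC := norm_nonneg c
  filter_upwards [eventually_ge_atTop ⌈4*(‖a‖+‖b‖+‖c‖+3)⌉₊] with n hn
  have hn' : 4*(‖a‖+‖b‖+‖c‖+3) ≤ (n:ℝ) := le_trans (Nat.le_ceil _) (Nat.cast_le.mpr hn)
  have hcn : (0:ℝ) < ‖c + (n:ℂ)‖ := norm_pos_iff.mpr (add_nat_ne_zero hc n)
  have hCp : (0:ℝ) < ‖(ascPochhammer ℂ n).eval c‖ := norm_pos_iff.mpr (pochEval_ne_zero hc n)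
  have hfac : (0:ℝ) < (n.factorial : ℝ) := by positivity
  have key : ‖a + (n:ℂ)‖ * ‖b + (n:ℂ)‖ ≤ (3/2) * (‖c + (n:ℂ)‖ * ((n:ℝ)+1)) := by
    have ha' : ‖a + (n:ℂ)‖ ≤ ‖a‖ + n := by
      calc ‖a + (n:ℂ)‖ ≤ ‖a‖ + ‖(n:ℂ)‖ := norm_add_le _ _
        _ = ‖a‖ + n := by simp
    have hb' : ‖b + (n:ℂ)‖ ≤ ‖b‖ + n := by
      calc ‖b + (n:ℂ)‖ ≤ ‖b‖ + ‖(n:ℂ)‖ := norm_add_le _ _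
        _ = ‖b‖ + n := by simp
    have hc' : (n:ℝ) - ‖c‖ ≤ ‖c + (n:ℂ)‖ := by
      have h1 : ‖(n:ℂ)‖ ≤ ‖c + (n:ℂ)‖ + ‖c‖ := by
        calc ‖(n:ℂ)‖ = ‖(c + (n:ℂ)) - c‖ := by ring_nf
          _ ≤ ‖c + (n:ℂ)‖ + ‖c‖ := norm_sub_le _ _
      have h2 : ‖(n:ℂ)‖ = (n:ℝ) := by simp
      linarith
    have h3 : ‖a + (n:ℂ)‖ * ‖b + (n:ℂ)‖ ≤ (‖a‖ + n) * (‖b‖ + n) :=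
      mul_le_mul ha' hb' (norm_nonneg _) (by positivity)
    have h4 : (3/2) * (((n:ℝ) - ‖c‖) * ((n:ℝ)+1)) ≤ (3/2) * (‖c + (n:ℂ)‖ * ((n:ℝ)+1)) := by
      gcongr
    nlinarith [mul_nonneg hA (sub_nonneg.mpr (show ‖b‖ ≤ (n:ℝ) by linarith)),
      mul_nonneg hC (sub_nonneg.mpr (show (12:ℝ) ≤ (n:ℝ) by linarith)),
      mul_nonneg hB (sub_nonneg.mpr (show ‖a‖ ≤ (n:ℝ) by linarith))]
  have hnn : 0 ≤ hypBound a b c n := by unfold hypBound; positivity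
  have hid : hypBound a b c (n+1) =
      hypBound a b c n * ((‖a + (n:ℂ)‖ * ‖b + (n:ℂ)‖) / (‖c + (n:ℂ)‖ * ((n:ℝ)+1)) * (1/2)) := by
    unfold hypBound
    rw [pochEval_succ, pochEval_succ, pochEval_succ, Nat.factorial_succ]
    push_cast
    rw [norm_mul, norm_mul, norm_mul]
    field_simp
    ring
  have hq : (‖a + (n:ℂ)‖ * ‖b + (n:ℂ)‖) / (‖c + (n:ℂ)‖ * ((n:ℝ)+1)) * (1/2) ≤ 3/4 := by
    have hD : (0:ℝ) < ‖c + (n:ℂ)‖ * ((n:ℝ)+1) := by positivity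
    have := (div_le_iff₀ hD).mpr (by linarith [key] :
      ‖a + (n:ℂ)‖ * ‖b + (n:ℂ)‖ ≤ (3/2) * (‖c + (n:ℂ)‖ * ((n:ℝ)+1)))
    linarith
  rw [Real.norm_of_nonneg (by unfold hypBound; positivity),
    Real.norm_of_nonneg hnn, hid]
  calc hypBound a b c n * _ ≤ hypBound a b c n * (3/4) := mul_le_mul_of_nonneg_left hq hnn
    _ = 3/4 * hypBound a b c n := by ring

lemma hyp_continuousOn (a b c : ℂ) (hc : 0 < c.re) :
    ContinuousOn (fun z => hyp a b c z) (Metric.closedBall (0:ℂ) (1/2)) := by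
  apply continuousOn_tsum (u := hypBound a b c)
  · intro n
    exact (continuous_const.mul (continuous_pow n)).continuousOn
  · exact hypBound_summable a b c hc
  · intro n z hz
    exact norm_hypTerm_le a b c z (mem_closedBall_zero_iff.mp hz) n

lemma hyp_norm_le (a b c : ℂ) (hc : 0 < c.re) {z : ℂ} (hz : ‖z‖ ≤ 1/2) :
    ‖hyp a b c z‖ ≤ ∑' n, hypBound a b c n := by
  have hs := hypBound_summable a b c hc
  have hsn : Summable (fun n => ‖hypTerm a b c z n‖) :=
    hs.of_nonneg_of_le (fun n => norm_nonneg _) (norm_hypTerm_le a b c z hz)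
  exact (norm_tsum_le_tsum_norm hsn).trans
    (Summable.tsum_le_tsum (norm_hypTerm_le a b c z hz) hsn hs)

lemma aux1 (a b c w₁ w₂ : ℂ) (hc : 0 < c.re) (hw₂ : w₂.re = -(1/2)) (hw₁ : w₁.re ≤ 0) :
    IntegrableOn (fun t : ℝ => ((1-t:ℝ):ℂ)^w₁ * ((t:ℝ):ℂ)^w₂ * hyp a b c t)
      (Ioo 0 (1/2)) volume := by
  set C := ∑' n, hypBound a b c n with hCdef
  have hC0 : 0 ≤ C := tsum_nonneg (fun n => by unfold hypBound; positivity)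
  have hg : IntegrableOn (fun t : ℝ => (1/2:ℝ) ^ w₁.re * C * t ^ (-(1/2):ℝ))
      (Ioo 0 (1/2)) volume := by
    have h := intervalIntegral.intervalIntegrable_rpow' (a := 0) (b := 1/2)
      (r := -(1/2)) (by norm_num)
    rw [intervalIntegrable_iff_integrableOn_Ioo_of_le (by norm_num)] at h
    exact h.const_mul _
  apply Integrable.mono' hg
  · apply ContinuousOn.aestronglyMeasurable ?_ measurableSet_Ioo
    apply ContinuousOn.mul
    apply ContinuousOn.mul
    · apply ContinuousOn.cpow_const
      · exact (Complex.continuous_ofReal.comp (continuous_const.sub continuous_id)).continuousOn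
      · intro t ht
        exact Complex.ofReal_mem_slitPlane.mpr (by simp only [mem_Ioo] at ht; linarith [ht.2])
    · apply ContinuousOn.cpow_const
      · exact Complex.continuous_ofReal.continuousOn
      · intro t ht
        exact Complex.ofReal_mem_slitPlane.mpr ht.1
    · refine (hyp_continuousOn a b c hc).comp Complex.continuous_ofReal.continuousOn
        (fun t ht => mem_closedBall_zero_iff.mpr ?_)
      rw [Complex.norm_real, Real.norm_eq_abs, abs_of_pos ht.1]
      exact ht.2.le
  · filter_upwards [ae_restrict_mem measurableSet_Ioo] with t ht
    obtain ⟨ht0, ht1⟩ := ht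
    rw [norm_mul, norm_mul]
    have e1 : ‖((1-t:ℝ):ℂ) ^ w₁‖ = (1-t) ^ w₁.re := by
      rw [Complex.norm_cpow_eq_rpow_re_of_pos (by linarith)]
    have e2 : ‖((t:ℝ):ℂ) ^ w₂‖ = t ^ (-(1/2):ℝ) := by
      rw [Complex.norm_cpow_eq_rpow_re_of_pos ht0, hw₂]
    have e3 : ‖hyp a b c t‖ ≤ C :=
      hyp_norm_le a b c hc (by rw [Complex.norm_real, Real.norm_eq_abs, abs_of_pos ht0]; linarith)
    have e4 : (1-t:ℝ) ^ w₁.re ≤ (1/2:ℝ) ^ w₁.re :=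
      Real.rpow_le_rpow_of_nonpos (by norm_num) (by linarith) hw₁
    rw [e1, e2]
    calc (1-t)^w₁.re * t^(-(1/2):ℝ) * ‖hyp a b c (t:ℂ)‖
        ≤ (1/2:ℝ)^w₁.re * t^(-(1/2):ℝ) * C := by gcongr <;> positivity
      _ = (1/2:ℝ)^w₁.re * C * t^(-(1/2):ℝ) := by ring

lemma aux2 (a b c w₁ w₂ : ℂ) (hc : 0 < c.re) (hw₂ : w₂.re = -(1/2)) (hw₁ : 0 ≤ w₁.re) :
    IntegrableOn (fun t : ℝ => ((1-t:ℝ):ℂ)^w₁ * ((t:ℝ):ℂ)^w₂ * hyp a b c ((1-t:ℝ):ℂ))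
      (Ioo (1/2) 1) volume := by
  set C := ∑' n, hypBound a b c n with hCdef
  have hC0 : 0 ≤ C := tsum_nonneg (fun n => by unfold hypBound; positivity)
  have hg : IntegrableOn (fun _ : ℝ => (1:ℝ) * 2 * C) (Ioo (1/2) 1) volume :=
    (integrableOn_const_iff enorm_ne_top).mpr (Or.inr measure_Ioo_lt_top)
  apply Integrable.mono' hg
  · apply ContinuousOn.aestronglyMeasurable ?_ measurableSet_Ioo
    apply ContinuousOn.mul
    apply ContinuousOn.mul
    · apply ContinuousOn.cpow_const
      · exact (Complex.continuous_ofReal.comp (continuous_const.sub continuous_id)).continuousOn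
      · intro t ht
        exact Complex.ofReal_mem_slitPlane.mpr (by simp only [mem_Ioo] at ht; linarith [ht.2])
    · apply ContinuousOn.cpow_const
      · exact Complex.continuous_ofReal.continuousOn
      · intro t ht
        exact Complex.ofReal_mem_slitPlane.mpr (by simp only [mem_Ioo] at ht; linarith [ht.1])
    · refine (hyp_continuousOn a b c hc).comp
        ((Complex.continuous_ofReal.comp (continuous_const.sub continuous_id)).continuousOn)
        (fun t ht => mem_closedBall_zero_iff.mpr ?_)
      simp only [mem_Ioo] at ht
      rw [Complex.norm_real, Real.norm_eq_abs, abs_of_pos (by linarith [ht.2] : (0:ℝ) < 1 - t)]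
      linarith [ht.1]
  · filter_upwards [ae_restrict_mem measurableSet_Ioo] with t ht
    obtain ⟨ht0, ht1⟩ := ht
    rw [norm_mul, norm_mul]
    have e1 : ‖((1-t:ℝ):ℂ) ^ w₁‖ ≤ 1 := by
      rw [Complex.norm_cpow_eq_rpow_re_of_pos (by linarith)]
      exact Real.rpow_le_one (by linarith) (by linarith) hw₁
    have e2 : ‖((t:ℝ):ℂ) ^ w₂‖ ≤ 2 := by
      rw [Complex.norm_cpow_eq_rpow_re_of_pos (by linarith), hw₂]
      have h1 : t ^ (-(1/2):ℝ) ≤ (1/2:ℝ) ^ (-(1/2):ℝ) :=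
        Real.rpow_le_rpow_of_nonpos (by norm_num) ht0.le (by norm_num)
      have h2 : (1/2:ℝ) ^ (-(1/2):ℝ) ≤ 2 := by
        have hx : (1/2:ℝ) ^ (1:ℝ) ≤ (1/2:ℝ) ^ ((1:ℝ)/2) :=
          Real.rpow_le_rpow_of_exponent_ge (by norm_num) (by norm_num) (by norm_num)
        have hpos : (0:ℝ) < (1/2:ℝ) ^ (1:ℝ) := by positivity
        have h3 : ((1/2:ℝ) ^ ((1:ℝ)/2))⁻¹ ≤ ((1/2:ℝ) ^ (1:ℝ))⁻¹ := by
          exact inv_anti₀ hpos hx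
        rw [Real.rpow_neg (by norm_num)]
        rw [Real.rpow_one] at h3
        calc ((1/2:ℝ) ^ ((1/2):ℝ))⁻¹ ≤ ((1:ℝ)/2)⁻¹ := by
              convert h3 using 3 <;> norm_num
          _ = 2 := by norm_num
      linarith
    have e3 : ‖hyp a b c ((1-t:ℝ):ℂ)‖ ≤ C :=
      hyp_norm_le a b c hc (by rw [Complex.norm_real, Real.norm_eq_abs, abs_of_pos (by linarith : (0:ℝ) < 1 - t)]; linarith)
    calc ‖((1-t:ℝ):ℂ) ^ w₁‖ * ‖((t:ℝ):ℂ) ^ w₂‖ * ‖hyp a b c ((1-t:ℝ):ℂ)‖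
        ≤ 1 * 2 * C := by gcongr <;> positivity
      _ = (1:ℝ) * 2 * C := by ring

/-- Convergence of the two pieces of the integral `I₂(C,C,+)`. -/
theorem integral_CCP_I2_integrable (k₁₂ s₁ s₂ p₁ p₂ : ℝ) (h12 : 1 ≤ k₁₂) :
    IntegrableOn (fun t : ℝ =>
        ((1 - t : ℝ) : ℂ) ^ (-(k₁₂ : ℂ) + I * (p₁ : ℂ) + I * (p₂ : ℂ)) *
          ((t : ℝ) : ℂ) ^ (-(I * (p₂ : ℂ)) + I * (s₂ : ℂ) - 1 / 2) *
          hyp (1 - k₁₂ + I * (s₁ : ℂ) + I * (s₂ : ℂ))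
            (1 - k₁₂ - I * (s₁ : ℂ) + I * (s₂ : ℂ)) (1 + 2 * I * (s₂ : ℂ)) t)
      (Ioo 0 (1 / 2)) volume ∧
    IntegrableOn (fun t : ℝ =>
        ((1 - t : ℝ) : ℂ) ^ ((k₁₂ : ℂ) - 1 + I * (p₁ : ℂ) + I * (p₂ : ℂ)) *
          ((t : ℝ) : ℂ) ^ (-(I * (p₂ : ℂ)) + I * (s₂ : ℂ) - 1 / 2) *
          hyp ((k₁₂ : ℂ) - I * (s₁ : ℂ) + I * (s₂ : ℂ))
            ((k₁₂ : ℂ) + I * (s₁ : ℂ) + I * (s₂ : ℂ)) (2 * (k₁₂ : ℂ))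
            ((1 - t : ℝ) : ℂ))
      (Ioo (1 / 2) 1) volume := by
  have hw₂ : (-(I * (p₂ : ℂ)) + I * (s₂ : ℂ) - 1 / 2).re = -(1/2) := by
    simp [Complex.add_re, Complex.sub_re, Complex.neg_re, Complex.mul_re]
  constructor
  · exact aux1 _ _ _ _ _ (by simp) hw₂ (by simp [Complex.add_re, Complex.neg_re]; linarith)
  · exact aux2 _ _ _ _ _ (by simp; linarith) hw₂
      (by simp [Complex.add_re, Complex.sub_re]; linarith)
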